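/- Let A be the associative algebra generated by q, t, t⁻¹ with relations qt − tq = 1 and t t⁻¹ = t⁻¹ t = 1 (the algebra of differential operators on Laurent polynomials k[t,t⁻¹], with q acting as d/dt). For m ∈ ℤ₊ define q^{(m)}(z) = Σ_{n∈ℤ} (1/m!) tⁿ qᵐ z^{−n−1}. Then for any m,k ∈ ℤ₊ the pair (q^{(m)}(z), q^{(k)}(z)) is local with locality value exactly m+1. -/

import Mathlib

set_option linter.unusedSectionVars false
set_option maxHeartbeats 1600000


variable (K : Type*) [Field K] [CharZero K]

/-- Defining relations of the algebra of differential operators on `K[t,t⁻¹]`: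
the generators are `0 ↦ q`, `1 ↦ t`, `2 ↦ t⁻¹`, and the relations are
`q t − t q = 1`, `t t⁻¹ = 1`, `t⁻¹ t = 1`. -/
inductive WeylRel : FreeAlgebra K (Fin 3) → FreeAlgebra K (Fin 3) → Prop
  | qt : WeylRel (FreeAlgebra.ι K (0 : Fin 3) * FreeAlgebra.ι K (1 : Fin 3)
      - FreeAlgebra.ι K (1 : Fin 3) * FreeAlgebra.ι K (0 : Fin 3)) 1
  | tt' : WeylRel (FreeAlgebra.ι K (1 : Fin 3) * FreeAlgebra.ι K (2 : Fin 3)) 1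
  | t't : WeylRel (FreeAlgebra.ι K (2 : Fin 3) * FreeAlgebra.ι K (1 : Fin 3)) 1

/-- The associative algebra generated by `q, t, t⁻¹` with `qt − tq = 1`. -/
abbrev WeylLaurent := RingQuot (WeylRel K)

noncomputable def qGen : WeylLaurent K := RingQuot.mkAlgHom K (WeylRel K) (FreeAlgebra.ι K 0)
noncomputable def tGen : WeylLaurent K := RingQuot.mkAlgHom K (WeylRel K) (FreeAlgebra.ι K 1)
noncomputable def tInv : WeylLaurent K := RingQuot.mkAlgHom K (WeylRel K) (FreeAlgebra.ι K 2)

/-- `tⁿ` for `n ∈ ℤ`. -/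
noncomputable def tpow (n : ℤ) : WeylLaurent K :=
  if 0 ≤ n then tGen K ^ n.toNat else tInv K ^ (-n).toNat

/-- The coefficient `(1/m!) tⁿ qᵐ` of the formal distribution
`q^{(m)}(z) = Σₙ (1/m!) tⁿ qᵐ z^{−n−1}`. -/
noncomputable def qDist (m : ℕ) (n : ℤ) : WeylLaurent K :=
  ((m.factorial : K)⁻¹) • (tpow K n * qGen K ^ m)

/-- `(a(z), b(z))` is local with locality value at most `N`. -/
def IsLocalAt (a b : ℤ → WeylLaurent K) (N : ℕ) : Prop :=
  ∀ n m : ℤ, ∑ s ∈ Finset.range (N + 1),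
    ((-1) ^ s * (N.choose s) : ℤ) • (a (n - (s : ℤ)) * b (m + (s : ℤ))) = 0



/-- falling factorial `p (p-1) ⋯ (p-j+1)` -/
def ff (p : ℤ) (j : ℕ) : ℤ := ∏ i ∈ Finset.range j, (p - i)

lemma ff_zero (p : ℤ) : ff p 0 = 1 := rfl

lemma ff_succ (p : ℤ) (j : ℕ) : ff p (j+1) = ff p j * (p - j) :=
  Finset.prod_range_succ _ _

lemma ff_succ' (p : ℤ) (j : ℕ) : ff p (j+1) = p * ff (p-1) j := by
  rw [ff, Finset.prod_range_succ']
  have : ∀ i ∈ Finset.range j, (p - ((i:ℤ)+1)) = (p - 1 - i) := by intro i _; ring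
  rw [show (∏ i ∈ Finset.range j, (p - ((i:ℕ)+1:ℕ))) = ∏ i ∈ Finset.range j, (p-1 - i) from
    Finset.prod_congr rfl (by intro i _; push_cast; ring)]
  simp [ff, mul_comm]

lemma ff_diff (p : ℤ) (j : ℕ) : ff (p+1) (j+1) - ff p (j+1) = (j+1) * ff p j := by
  rw [ff_succ' (p+1) j, ff_succ p j]
  simp only [add_sub_cancel_right]
  ring

lemma ff_self (k : ℕ) : ff (k : ℤ) k = k.factorial := by
  induction k with
  | zero => rfl
  | succ n ih => rw [show ((n+1:ℕ):ℤ) = (n:ℤ)+1 by push_cast; ring, ff_succ',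
      add_sub_cancel_right, ih]; push_cast [Nat.factorial_succ]; ring

lemma ff_eq_zero {s j : ℕ} (h : s < j) : ff (s : ℤ) j = 0 :=
  Finset.prod_eq_zero (Finset.mem_range.mpr h) (by simp)

lemma alt_pascal (g : ℕ → ℤ) (N : ℕ) :
    ∑ s ∈ Finset.range (N+2), (-1:ℤ)^s * ((N+1).choose s) * g s
      = ∑ s ∈ Finset.range (N+1), (-1:ℤ)^s * (N.choose s) * (g s - g (s+1)) := by
  have h1 : ∑ s ∈ Finset.range (N+2), (-1:ℤ)^s * ((N+1).choose s) * g s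
      = (∑ s ∈ Finset.range (N+1), (-1:ℤ)^(s+1) * (((N.choose s) : ℤ) + (N.choose (s+1))) * g (s+1))
        + g 0 := by
    rw [Finset.sum_range_succ' (fun s => (-1:ℤ)^s * ((N+1).choose s) * g s) (N+1)]
    simp [Nat.choose_succ_succ, mul_comm]
  have h2 : ∑ s ∈ Finset.range (N+1), (-1:ℤ)^s * (N.choose s) * g s
      = (∑ s ∈ Finset.range (N+1), (-1:ℤ)^(s+1) * (N.choose (s+1)) * g (s+1)) + g 0 := by
    rw [Finset.sum_range_succ' (fun s => (-1:ℤ)^s * ((N).choose s) * g s) N]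
    rw [Finset.sum_range_succ (fun s => (-1:ℤ)^(s+1) * ((N).choose (s+1)) * g (s+1)) N]
    simp [Nat.choose_succ_self]
  rw [h1]
  have h3 : ∀ s, (-1:ℤ)^(s+1) * (((N.choose s):ℤ) + (N.choose (s+1))) * g (s+1)
      = (-1:ℤ)^(s+1) * (N.choose (s+1)) * g (s+1) - (-1:ℤ)^s * (N.choose s) * g (s+1) := by
    intro s; rw [pow_succ]; ring
  simp only [h3, Finset.sum_sub_distrib]
  simp only [mul_sub, Finset.sum_sub_distrib, h2]
  ring

lemma altsum (N : ℕ) : ∀ j < N, ∀ c : ℤ,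
    ∑ s ∈ Finset.range (N+1), (-1:ℤ)^s * (N.choose s) * ff (c + s) j = 0 := by
  induction N with
  | zero => intro j hj; omega
  | succ N ih =>
    intro j hj c
    cases j with
    | zero =>
      simp only [ff_zero, mul_one]
      have := Int.alternating_sum_range_choose (n := N+1)
      rw [this]; simp
    | succ j =>
      rw [show N+1+1 = N+2 from rfl, alt_pascal (fun s => ff (c + s) (j+1)) N]
      have hd : ∀ s : ℕ, ff (c + s) (j+1) - ff (c + (s+1:ℕ)) (j+1)
          = -((j+1) * ff (c + s) j) := by
        intro s
        have h := ff_diff (c + s) j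
        push_cast
        rw [show c + ((s:ℤ)+1) = c + (s:ℤ) + 1 by ring]
        linarith
      calc ∑ s ∈ Finset.range (N+1), (-1:ℤ)^s * (N.choose s) *
              (ff (c + s) (j+1) - ff (c + (s+1:ℕ)) (j+1))
          = ∑ s ∈ Finset.range (N+1), -(((j:ℤ)+1) * ((-1:ℤ)^s * (N.choose s) * ff (c + s) j)) := by
            refine Finset.sum_congr rfl fun s _ => ?_
            rw [hd s]; ring
        _ = -(((j:ℤ)+1) * ∑ s ∈ Finset.range (N+1), (-1:ℤ)^s * (N.choose s) * ff (c + s) j) := by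
            rw [Finset.sum_neg_distrib, ← Finset.mul_sum]
        _ = 0 := by rw [ih j (by omega) c]; ring

lemma qt_rel : qGen K * tGen K = tGen K * qGen K + 1 := by
  have h := RingQuot.mkAlgHom_rel K (WeylRel.qt (K := K))
  simp only [map_sub, map_mul, map_one] at h
  rw [sub_eq_iff_eq_add'] at h
  exact h

lemma tt'_rel : tGen K * tInv K = 1 := by
  have h := RingQuot.mkAlgHom_rel K (WeylRel.tt' (K := K))
  simp only [map_mul, map_one] at h
  exact h

lemma t't_rel : tInv K * tGen K = 1 := by
  have h := RingQuot.mkAlgHom_rel K (WeylRel.t't (K := K))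
  simp only [map_mul, map_one] at h
  exact h

noncomputable def U : (WeylLaurent K)ˣ := ⟨tGen K, tInv K, tt'_rel K, t't_rel K⟩

lemma tpow_eq (n : ℤ) : tpow K n = ((U K ^ n : (WeylLaurent K)ˣ) : WeylLaurent K) := by
  rcases le_or_gt 0 n with h | h
  · rw [tpow, if_pos h]
    obtain ⟨j, rfl⟩ := Int.eq_ofNat_of_zero_le h
    rw [zpow_natCast, Units.val_pow_eq_pow_val]
    simp [U]
  · rw [tpow, if_neg (not_le.mpr h)]
    obtain ⟨j, rfl⟩ : ∃ j : ℕ, n = -(j:ℤ) := ⟨(-n).toNat, by omega⟩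
    rw [zpow_neg, zpow_natCast, ← inv_pow, Units.val_pow_eq_pow_val]
    simp [U]

lemma tpow_add (a b : ℤ) : tpow K (a+b) = tpow K a * tpow K b := by
  simp [tpow_eq, zpow_add, Units.val_mul]

lemma tpow_zero : tpow K 0 = 1 := by simp [tpow]

lemma tpow_one : tpow K 1 = tGen K := by simp [tpow]

lemma tpow_neg_one : tpow K (-1) = tInv K := by simp [tpow]

lemma q_tInv : qGen K * tInv K = tInv K * qGen K - tInv K * tInv K := by
  have h : tInv K * (qGen K * tGen K) * tInv K = tInv K * (tGen K * qGen K + 1) * tInv K := by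
    rw [qt_rel]
  rw [← mul_assoc (tInv K) (qGen K) (tGen K), mul_assoc (tInv K * qGen K) (tGen K) (tInv K),
    tt'_rel, mul_one, mul_add, mul_one, add_mul, ← mul_assoc (tInv K) (tGen K) (qGen K),
    t't_rel, one_mul] at h
  rw [h, add_sub_cancel_right]

lemma q_tpow (p : ℤ) : qGen K * tpow K p = tpow K p * qGen K + (p : K) • tpow K (p-1) := by
  induction p using Int.induction_on with
  | zero => simp [tpow_zero]
  | succ n ih =>
    have h1 : tpow K ((n:ℤ)+1) = tpow K n * tGen K := by rw [tpow_add, tpow_one]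
    have h2 : tpow K n = tpow K ((n:ℤ)-1) * tGen K := by
      rw [← tpow_one K, ← tpow_add]; norm_num
    rw [h1, ← mul_assoc, ih, add_mul, smul_mul_assoc, mul_assoc, qt_rel, mul_add, mul_one,
      ← mul_assoc, ← h1, ← h2]
    push_cast
    rw [add_smul, one_smul, show ((n:ℤ)+1-1 : ℤ) = (n:ℤ) by ring]
    abel
  | pred n ih =>
    have e1 : tpow K (-(n:ℤ)-1) = tpow K (-(n:ℤ)) * tInv K := by
      rw [← tpow_neg_one K, ← tpow_add, sub_eq_add_neg]
    have e2 : tpow K (-(n:ℤ)-2) = tpow K (-(n:ℤ)-1) * tInv K := by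
      rw [← tpow_neg_one K, ← tpow_add, show (-(n:ℤ)-2 : ℤ) = -(n:ℤ)-1 + -1 by ring]
    have e3 : tpow K (-(n:ℤ)-2) = tpow K (-(n:ℤ)) * (tInv K * tInv K) := by
      rw [e2, e1, mul_assoc]
    rw [e1, ← mul_assoc, ih, add_mul, smul_mul_assoc, ← e2,
      mul_assoc, q_tInv, mul_sub, ← mul_assoc, ← e1, ← e3,
      show (-(n:ℤ)-1-1 : ℤ) = -(n:ℤ)-2 by ring]
    push_cast
    module

lemma q_mul_term (c : K) (a : ℤ) (r : ℕ) :
    qGen K * (c • (tpow K a * qGen K ^ r))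
      = c • (tpow K a * qGen K ^ (r+1)) + (c * (a : K)) • (tpow K (a-1) * qGen K ^ r) := by
  rw [mul_smul_comm, ← mul_assoc, q_tpow, add_mul, smul_mul_assoc, mul_assoc, ← pow_succ',
    smul_add, smul_smul]

lemma qpow_tpow (m : ℕ) (p : ℤ) :
    qGen K ^ m * tpow K p = ∑ j ∈ Finset.range (m+1),
      ((m.choose j : K) * ((ff p j : ℤ) : K)) • (tpow K (p - j) * qGen K ^ (m - j)) := by
  induction m with
  | zero => simp [ff_zero]
  | succ m ih =>
    have step : qGen K ^ (m+1) * tpow K p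
        = ∑ j ∈ Finset.range (m+1),
            ((m.choose j : K) * ((ff p j : ℤ) : K)) • (tpow K (p - j) * qGen K ^ (m + 1 - j))
          + ∑ j ∈ Finset.range (m+1),
            ((m.choose j : K) * ((ff p (j+1) : ℤ) : K)) •
              (tpow K (p - j - 1) * qGen K ^ (m - j)) := by
      rw [pow_succ' (qGen K) m, mul_assoc, ih, Finset.mul_sum, ← Finset.sum_add_distrib]
      refine Finset.sum_congr rfl fun j hj => ?_
      have hj' : j ≤ m := Nat.lt_succ_iff.mp (Finset.mem_range.mp hj)
      rw [q_mul_term, show m - j + 1 = m + 1 - j by omega]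
      congr 2
      rw [ff_succ]
      push_cast
      ring
    rw [step]
    have e2 : ∀ j ∈ Finset.range (m+1),
        (((m.choose j : ℕ) : K) * ((ff p (j+1) : ℤ) : K)) •
          (tpow K (p - j - 1) * qGen K ^ (m - j))
        = (((m.choose j : ℕ) : K) * ((ff p (j+1) : ℤ) : K)) •
          (tpow K (p - ((j:ℕ)+1:ℕ)) * qGen K ^ (m + 1 - (j+1))) := by
      intro j _
      rw [Nat.succ_sub_succ]
      congr 2
      push_cast; ring
    rw [Finset.sum_congr rfl e2]
    rw [Finset.sum_range_succ' (fun j => (((m+1).choose j : K) * ((ff p j : ℤ) : K)) •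
      (tpow K (p - j) * qGen K ^ (m + 1 - j))) (m+1)]
    have hsplit : ∀ j ∈ Finset.range (m+1),
        ((((m+1).choose (j+1) : ℕ) : K) * ((ff p (j+1) : ℤ) : K)) •
          (tpow K (p - ((j:ℕ)+1:ℕ)) * qGen K ^ (m + 1 - (j+1)))
        = (((m.choose (j+1) : ℕ) : K) * ((ff p (j+1) : ℤ) : K)) •
            (tpow K (p - ((j:ℕ)+1:ℕ)) * qGen K ^ (m + 1 - (j+1)))
          + (((m.choose j : ℕ) : K) * ((ff p (j+1) : ℤ) : K)) •
            (tpow K (p - ((j:ℕ)+1:ℕ)) * qGen K ^ (m + 1 - (j+1))) := by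
      intro j _
      rw [← add_smul]
      congr 1
      rw [Nat.choose_succ_succ]
      push_cast
      ring
    rw [Finset.sum_congr rfl hsplit, Finset.sum_add_distrib]
    have hzero : (((m.choose (m+1) : ℕ) : K) * ((ff p (m+1) : ℤ) : K)) •
        (tpow K (p - ((m:ℕ)+1:ℕ)) * qGen K ^ (m + 1 - (m+1))) = 0 := by
      simp [Nat.choose_succ_self]
    have hS1 : (∑ j ∈ Finset.range (m+1), (((m.choose j : ℕ) : K) * ((ff p j : ℤ) : K)) •
          (tpow K (p - j) * qGen K ^ (m + 1 - j)))
        = (∑ j ∈ Finset.range (m+1), (((m.choose (j+1) : ℕ) : K) * ((ff p (j+1) : ℤ) : K)) •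
            (tpow K (p - ((j:ℕ)+1:ℕ)) * qGen K ^ (m + 1 - (j+1))))
          + (((m.choose 0 : ℕ) : K) * ((ff p 0 : ℤ) : K)) •
            (tpow K (p - ((0:ℕ):ℤ)) * qGen K ^ (m + 1 - 0)) := by
      rw [Finset.sum_range_succ (fun j => (((m.choose (j+1) : ℕ) : K) * ((ff p (j+1) : ℤ) : K)) •
        (tpow K (p - ((j:ℕ)+1:ℕ)) * qGen K ^ (m + 1 - (j+1)))) m, hzero, add_zero,
        ← Finset.sum_range_succ' (fun j => (((m.choose j : ℕ) : K) * ((ff p j : ℤ) : K)) •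
          (tpow K (p - j) * qGen K ^ (m + 1 - j))) m]
    rw [hS1]
    simp only [Nat.choose_zero_right, Nat.cast_one]
    abel


lemma qDist_mul (m k : ℕ) (a b : ℤ) :
    qDist K m a * qDist K k b = ∑ j ∈ Finset.range (m+1),
      (((m.factorial : K))⁻¹ * ((k.factorial : K))⁻¹ * (m.choose j : K) * ((ff b j : ℤ) : K)) •
        (tpow K (a + b - j) * qGen K ^ (m + k - j)) := by
  rw [qDist, qDist, smul_mul_smul_comm, mul_assoc (tpow K a) (qGen K ^ m),
    ← mul_assoc (qGen K ^ m) (tpow K b), qpow_tpow, Finset.sum_mul, Finset.mul_sum,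
    Finset.smul_sum]
  refine Finset.sum_congr rfl fun j hj => ?_
  have hj' : j ≤ m := Nat.lt_succ_iff.mp (Finset.mem_range.mp hj)
  rw [smul_mul_assoc, mul_smul_comm, smul_smul]
  congr 1
  · ring
  · rw [← mul_assoc, ← mul_assoc, ← tpow_add, mul_assoc, ← pow_add]
    congr 2
    · ring
    · omega

lemma part1 (m k : ℕ) : IsLocalAt K (qDist K m) (qDist K k) (m + 1) := by
  intro n m'
  have hterm : ∀ s : ℕ,
      (((-1)^s * (((m+1).choose s) : ℤ)) : ℤ) • (qDist K m (n - s) * qDist K k (m' + s))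
      = ∑ j ∈ Finset.range (m+1),
          (((m.factorial : K))⁻¹ * ((k.factorial : K))⁻¹ * (m.choose j : K) *
            ((((-1)^s * ((m+1).choose s) * ff (m' + s) j : ℤ)) : K)) •
            (tpow K (n + m' - j) * qGen K ^ (m + k - j)) := by
    intro s
    rw [qDist_mul, Finset.smul_sum (N := WeylLaurent K) (M := ℤ)]
    refine Finset.sum_congr rfl fun j hj => ?_
    rw [← Int.cast_smul_eq_zsmul K, smul_smul]
    congr 1
    · push_cast; ring
    · congr 2
      ring
  simp only [hterm]
  rw [Finset.sum_comm]
  refine Finset.sum_eq_zero fun j hj => ?_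
  have hj' : j < m + 1 := Finset.mem_range.mp hj
  have h0 : (∑ s ∈ Finset.range (m+1+1), (-1:ℤ)^s * (((m+1).choose s) : ℤ) * ff (m' + s) j) = 0 :=
    altsum (m+1) j hj' m'
  rw [← Finset.sum_smul, ← Finset.mul_sum, ← Int.cast_sum, h0]
  simp

noncomputable def D : (ℤ →₀ K) →ₗ[K] (ℤ →₀ K) :=
  Finsupp.lsum K fun n => (n : K) • Finsupp.lsingle (n-1)

noncomputable def Sh (a : ℤ) : (ℤ →₀ K) →ₗ[K] (ℤ →₀ K) :=
  Finsupp.lmapDomain K K (· + a)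

lemma D_single (n : ℤ) (c : K) : D K (Finsupp.single n c) = (n : K) • Finsupp.single (n-1) c := by
  rw [D, Finsupp.lsum_single, LinearMap.smul_apply, Finsupp.lsingle_apply]

lemma Sh_single (a n : ℤ) (c : K) : Sh K a (Finsupp.single n c) = Finsupp.single (n+a) c := by
  rw [Sh, Finsupp.lmapDomain_apply, Finsupp.mapDomain_single]

lemma rel1 : D K * Sh K 1 - Sh K 1 * D K = 1 := by
  refine Finsupp.lhom_ext fun a b => ?_
  simp only [LinearMap.sub_apply, Module.End.mul_apply, Module.End.one_apply, D_single,
    Sh_single, map_smul]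
  rw [show a + 1 - 1 = a by ring, show a - 1 + 1 = a by ring, ← sub_smul]
  push_cast
  norm_num

lemma rel2 : Sh K 1 * Sh K (-1) = 1 := by
  refine Finsupp.lhom_ext fun a b => ?_
  simp only [Module.End.mul_apply, Sh_single, Module.End.one_apply]
  norm_num

lemma rel3 : Sh K (-1) * Sh K 1 = 1 := by
  refine Finsupp.lhom_ext fun a b => ?_
  simp only [Module.End.mul_apply, Sh_single, Module.End.one_apply]
  norm_num

noncomputable def rep : WeylLaurent K →ₐ[K] Module.End K (ℤ →₀ K) :=
  RingQuot.liftAlgHom K ⟨FreeAlgebra.lift K ![D K, Sh K 1, Sh K (-1)], by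
    intro x y h
    induction h with
    | qt =>
      simp only [map_sub, map_mul, map_one, FreeAlgebra.lift_ι_apply, Matrix.cons_val_zero,
        Matrix.cons_val_one, Matrix.head_cons]
      exact rel1 K
    | tt' =>
      simp only [map_mul, map_one, FreeAlgebra.lift_ι_apply, Matrix.cons_val_one,
        Matrix.head_cons, Matrix.cons_val_two, Matrix.tail_cons]
      exact rel2 K
    | t't =>
      simp only [map_mul, map_one, FreeAlgebra.lift_ι_apply, Matrix.cons_val_one,
        Matrix.head_cons, Matrix.cons_val_two, Matrix.tail_cons]
      exact rel3 K⟩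

lemma rep_q : rep K (qGen K) = D K := by
  rw [qGen, rep, RingQuot.liftAlgHom_mkAlgHom_apply, FreeAlgebra.lift_ι_apply]
  simp

lemma rep_t : rep K (tGen K) = Sh K 1 := by
  rw [tGen, rep, RingQuot.liftAlgHom_mkAlgHom_apply, FreeAlgebra.lift_ι_apply]
  simp

lemma rep_t' : rep K (tInv K) = Sh K (-1) := by
  rw [tInv, rep, RingQuot.liftAlgHom_mkAlgHom_apply, FreeAlgebra.lift_ι_apply]
  simp

lemma Sh_comp (a b : ℤ) : Sh K a * Sh K b = Sh K (a+b) := by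
  refine Finsupp.lhom_ext fun n c => ?_
  simp only [Module.End.mul_apply, Sh_single]
  rw [show n + b + a = n + (a + b) by ring]

lemma Sh_one_pow (j : ℕ) : (Sh K 1)^j = Sh K j := by
  induction j with
  | zero =>
    refine Finsupp.lhom_ext fun n c => ?_
    simp only [pow_zero, Module.End.one_apply, Sh_single, Nat.cast_zero, add_zero]
  | succ j ih =>
    rw [pow_succ, ih, Sh_comp]
    congr 1

lemma Sh_negone_pow (j : ℕ) : (Sh K (-1))^j = Sh K (-(j:ℤ)) := by
  induction j with
  | zero =>
    refine Finsupp.lhom_ext fun n c => ?_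
    simp only [pow_zero, Module.End.one_apply, Sh_single, Nat.cast_zero, neg_zero, add_zero]
  | succ j ih =>
    rw [pow_succ, ih, Sh_comp]
    congr 1
    omega

lemma rep_tpow (n : ℤ) : rep K (tpow K n) = Sh K n := by
  rcases le_or_gt 0 n with h | h
  · rw [tpow, if_pos h, map_pow, rep_t, Sh_one_pow]
    congr 1
    omega
  · rw [tpow, if_neg (not_le.mpr h), map_pow, rep_t', Sh_negone_pow]
    congr 1
    omega

lemma Dpow_single (m : ℕ) (p : ℤ) (c : K) :
    (D K ^ m) (Finsupp.single p c) = ((ff p m : ℤ) : K) • Finsupp.single (p - m) c := by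
  induction m generalizing p with
  | zero => simp [ff_zero]
  | succ m ih =>
    rw [pow_succ', Module.End.mul_apply, ih, map_smul, D_single, smul_smul, ff_succ]
    congr 1
    · push_cast; ring
    · congr 1
      push_cast; ring

lemma rep_qDist (mm : ℕ) (n p : ℤ) (c : K) :
    rep K (qDist K mm n) (Finsupp.single p c)
      = (((mm.factorial : K))⁻¹ * ((ff p mm : ℤ) : K)) • Finsupp.single (p - mm + n) c := by
  rw [qDist, map_smul, map_mul, map_pow, rep_q, rep_tpow, LinearMap.smul_apply,
    Module.End.mul_apply, Dpow_single, map_smul, Sh_single, smul_smul]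

lemma altsum_last (m : ℕ) :
    ∑ s ∈ Finset.range (m+1), (-1:ℤ)^s * (m.choose s) * ff (s:ℤ) m
      = (-1)^m * m.factorial := by
  rw [Finset.sum_range_succ,
    Finset.sum_eq_zero (fun s hs => by rw [ff_eq_zero (Finset.mem_range.mp hs)]; ring),
    ff_self]
  simp

lemma part2 (m k : ℕ) : ¬ IsLocalAt K (qDist K m) (qDist K k) m := by
  intro h
  have H := h 0 0
  have H2 := congrArg (fun x : WeylLaurent K => rep K x (Finsupp.single (k : ℤ) (1:K))) H
  simp only [map_sum, map_zsmul, map_zero, LinearMap.sum_apply, LinearMap.smul_apply,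
    LinearMap.zero_apply] at H2
  have e : ∀ s : ℕ, rep K (qDist K m ((0:ℤ) - s) * qDist K k ((0:ℤ) + s))
        (Finsupp.single (k:ℤ) (1:K))
      = (((m.factorial : K))⁻¹ * ((ff (s:ℤ) m : ℤ) : K)) • Finsupp.single (-(m:ℤ)) (1:K) := by
    intro s
    rw [map_mul, Module.End.mul_apply, rep_qDist, map_smul, rep_qDist]
    rw [ff_self, show ((k.factorial : ℤ) : K) = (k.factorial : K) by push_cast; ring,
      inv_mul_cancel₀ (by exact_mod_cast Nat.factorial_ne_zero k), one_smul]
    rw [show (k:ℤ) - k + (0 + s) = (s:ℤ) by ring, show (s:ℤ) - m + (0 - s) = -(m:ℤ) by ring]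
  rw [Finset.sum_congr rfl (fun s _ => by rw [e s])] at H2
  have H3 : (∑ s ∈ Finset.range (m+1), (((-1)^s * (m.choose s) : ℤ) : K) *
      (((m.factorial : K))⁻¹ * ((ff (s:ℤ) m : ℤ) : K))) • Finsupp.single (-(m:ℤ)) (1:K)
      = (0 : ℤ →₀ K) := by
    rw [Finset.sum_smul] at *
    rw [← H2]
    refine Finset.sum_congr rfl fun s _ => ?_
    rw [← Int.cast_smul_eq_zsmul K, smul_smul]
  have hscal : (∑ s ∈ Finset.range (m+1), (((-1)^s * (m.choose s) : ℤ) : K) *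
      (((m.factorial : K))⁻¹ * ((ff (s:ℤ) m : ℤ) : K))) = (-1:K)^m := by
    have : ∀ s ∈ Finset.range (m+1), (((-1)^s * (m.choose s) : ℤ) : K) *
        (((m.factorial : K))⁻¹ * ((ff (s:ℤ) m : ℤ) : K))
        = ((m.factorial : K))⁻¹ * ((((-1)^s * (m.choose s) * ff (s:ℤ) m : ℤ)) : K) := by
      intro s _
      push_cast
      ring
    rw [Finset.sum_congr rfl this, ← Finset.mul_sum, ← Int.cast_sum, altsum_last]
    push_cast
    rw [← mul_assoc, mul_comm ((m.factorial : K))⁻¹, mul_assoc,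
      inv_mul_cancel₀ (by exact_mod_cast Nat.factorial_ne_zero m), mul_one]
  rw [hscal] at H3
  have : ((-1:K)^m) ≠ 0 := by
    simp
  rw [smul_eq_zero] at H3
  rcases H3 with h1 | h2
  · exact this h1
  · exact one_ne_zero (Finsupp.single_eq_zero.mp h2)

/-- The formal distributions `q^{(m)}(z)` over the algebra of differential operators
on `K[t,t⁻¹]` are pairwise mutually local, and the locality value of the pair
`(q^{(m)}(z), q^{(k)}(z))` is exactly `m + 1`. -/
theorem stmt_5 (m k : ℕ) :
    IsLocalAt K (qDist K m) (qDist K k) (m + 1) ∧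
    ¬ IsLocalAt K (qDist K m) (qDist K k) m := by
  exact ⟨part1 K m k, part2 K m k⟩
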